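/- For a proper subdomain G of ℝⁿ and all x, y ∈ G, j*_G(x,y) ≤ s_G(x,y) ≤ (e^{j_G(x,y)} − 1)/2. -/

import Mathlib

open Metric Set

noncomputable def dd {n : ℕ} (G : Set (EuclideanSpace ℝ (Fin n))) (x : EuclideanSpace ℝ (Fin n)) : ℝ :=
  Metric.infDist x (frontier G)

noncomputable def jMet {n : ℕ} (G : Set (EuclideanSpace ℝ (Fin n))) (x y : EuclideanSpace ℝ (Fin n)) : ℝ :=
  Real.log (1 + dist x y / min (dd G x) (dd G y))

noncomputable def jStar {n : ℕ} (G : Set (EuclideanSpace ℝ (Fin n))) (x y : EuclideanSpace ℝ (Fin n)) : ℝ :=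
  Real.tanh (jMet G x y / 2)

noncomputable def sMet {n : ℕ} (G : Set (EuclideanSpace ℝ (Fin n))) (x y : EuclideanSpace ℝ (Fin n)) : ℝ :=
  ⨆ z : frontier G, dist x y / (dist x (z : EuclideanSpace ℝ (Fin n)) + dist (z : EuclideanSpace ℝ (Fin n)) y)

noncomputable def pMet {n : ℕ} (G : Set (EuclideanSpace ℝ (Fin n))) (x y : EuclideanSpace ℝ (Fin n)) : ℝ :=
  dist x y / Real.sqrt (dist x y ^ 2 + 4 * dd G x * dd G y)

noncomputable def vMet {n : ℕ} (G : Set (EuclideanSpace ℝ (Fin n))) (x y : EuclideanSpace ℝ (Fin n)) : ℝ :=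
  ⨆ z : frontier G, EuclideanGeometry.angle x (z : EuclideanSpace ℝ (Fin n)) y

lemma my_tanh_eq (a : ℝ) : Real.tanh a = (Real.exp (2*a) - 1) / (Real.exp (2*a) + 1) := by
  rw [Real.tanh_eq_sinh_div_cosh, Real.sinh_eq, Real.cosh_eq, Real.exp_neg, two_mul,
    Real.exp_add]
  have h1 : Real.exp a ≠ 0 := (Real.exp_pos a).ne'
  have h2 : Real.exp a + (Real.exp a)⁻¹ ≠ 0 := by positivity
  have h3 : Real.exp a * Real.exp a + 1 ≠ 0 := by positivity
  field_simp

lemma my_key {n : ℕ} (G : Set (EuclideanSpace ℝ (Fin n))) (hne : (frontier G).Nonempty)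
    (x y : EuclideanSpace ℝ (Fin n)) (c : ℝ) (hc0 : 0 < c)
    (hc : c < dist x y / (2 * dd G x + dist x y)) :
    ∃ z ∈ frontier G, c < dist x y / (dist x z + dist z y) := by
  set t := dist x y with ht
  have hd0 : 0 ≤ dd G x := Metric.infDist_nonneg
  have ht0 : 0 < t := by
    by_contra h
    push_neg at h
    have h' : t = 0 := le_antisymm h dist_nonneg
    rw [h', zero_div] at hc
    exact absurd hc (not_lt.mpr hc0.le)
  have hden : 0 < 2 * dd G x + t := by positivity
  have hct : c * (2 * dd G x + t) < t := (lt_div_iff₀ hden).mp hc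
  set δ : ℝ := (t - c * (2 * dd G x + t)) / (2 * c) with hδ
  have hδ0 : 0 < δ := div_pos (by linarith) (by linarith)
  obtain ⟨z, hz, hzd⟩ := (Metric.infDist_lt_iff hne).mp
    (show Metric.infDist x (frontier G) < dd G x + δ by
      simp only [dd]; linarith)
  refine ⟨z, hz, ?_⟩
  have htri : t ≤ dist x z + dist z y := dist_triangle x z y
  have hdenom : 0 < dist x z + dist z y := lt_of_lt_of_le ht0 htri
  rw [lt_div_iff₀ hdenom]
  have h1 : dist z y ≤ dist z x + t := dist_triangle z x y
  have h2 : dist x z + dist z y ≤ 2 * dist x z + t := by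
    rw [dist_comm z x] at h1; linarith
  have h3 : c * (dist x z + dist z y) ≤ c * (2 * dist x z + t) :=
    mul_le_mul_of_nonneg_left h2 hc0.le
  have h4 : c * (2 * dist x z + t) < c * (2 * (dd G x + δ) + t) := by
    apply mul_lt_mul_of_pos_left _ hc0
    linarith
  have h6 : 2 * c * δ = t - c * (2 * dd G x + t) := by
    rw [hδ]; field_simp
  nlinarith

theorem stmt1 {n : ℕ} (G : Set (EuclideanSpace ℝ (Fin n)))
    (hGo : IsOpen G) (hGc : IsConnected G) (hGne : G ≠ univ)
    (x y : EuclideanSpace ℝ (Fin n)) (hx : x ∈ G) (hy : y ∈ G) :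
    jStar G x y ≤ sMet G x y ∧ sMet G x y ≤ (Real.exp (jMet G x y) - 1) / 2 := by
  have hne : (frontier G).Nonempty := by
    rw [nonempty_iff_ne_empty]
    intro h
    rcases isClopen_iff.mp (isClopen_iff_frontier_eq_empty.mpr h) with h' | h'
    · exact absurd h' (Nonempty.ne_empty hGc.nonempty)
    · exact hGne h'
  haveI : Nonempty (frontier G) := hne.to_subtype
  have hfc : IsClosed (frontier G) := isClosed_frontier
  have ddpos : ∀ w : EuclideanSpace ℝ (Fin n), w ∈ G → 0 < dd G w := by
    intro w hw
    have hwn : w ∉ frontier G := by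
      rw [hGo.frontier_eq]
      exact fun h => h.2 hw
    exact (hfc.notMem_iff_infDist_pos hne).mp hwn
  set t := dist x y with htdef
  set D := min (dd G x) (dd G y) with hDdef
  have hD : 0 < D := lt_min (ddpos x hx) (ddpos y hy)
  have ht0 : 0 ≤ t := dist_nonneg
  have hexp : Real.exp (jMet G x y) = 1 + t / D := by
    rw [jMet, Real.exp_log (by positivity)]
  -- bound for each boundary point
  have hub : ∀ z : frontier G, t / (dist x (z : EuclideanSpace ℝ (Fin n)) + dist (z : EuclideanSpace ℝ (Fin n)) y) ≤ t / (2 * D) := by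
    intro ⟨z, hz⟩
    have h1 : D ≤ dist x z := le_trans (min_le_left _ _) (Metric.infDist_le_dist_of_mem hz)
    have h2 : D ≤ dist z y := by
      rw [dist_comm]
      exact le_trans (min_le_right _ _) (Metric.infDist_le_dist_of_mem hz)
    have : 2 * D ≤ dist x z + dist z y := by linarith
    gcongr
  have hbdd : BddAbove (range fun z : frontier G =>
      t / (dist x (z : EuclideanSpace ℝ (Fin n)) + dist (z : EuclideanSpace ℝ (Fin n)) y)) :=
    ⟨t / (2 * D), by rintro _ ⟨z, rfl⟩; exact hub z⟩
  constructor
  · -- lower bound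
    have hjs : jStar G x y = t / (2 * D + t) := by
      rw [jStar, my_tanh_eq]
      have h2 : 2 * (jMet G x y / 2) = jMet G x y := by ring
      rw [h2, hexp]
      have hD' : D ≠ 0 := hD.ne'
      have h3 : 2 * D + t ≠ 0 := by positivity
      field_simp
      ring
    rw [hjs]
    apply le_of_forall_lt
    intro c hc
    rcases lt_or_ge 0 c with hc0 | hc0
    · -- 0 < c : use my_key
      have hkey : ∃ z ∈ frontier G, c < t / (dist x z + dist z y) := by
        rcases le_total (dd G x) (dd G y) with h | h
        · have hDx : D = dd G x := min_eq_left h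
          exact my_key G hne x y c hc0 (by rw [← hDx]; exact hc)
        · have hDy : D = dd G y := min_eq_right h
          obtain ⟨z, hz, hlt⟩ := my_key G hne y x c hc0
            (by rw [← hDy, dist_comm y x]; exact hc)
          refine ⟨z, hz, ?_⟩
          simpa [dist_comm, add_comm] using hlt
      obtain ⟨z, hz, hlt⟩ := hkey
      exact lt_of_lt_of_le hlt (le_ciSup hbdd ⟨z, hz⟩)
    · -- c ≤ 0
      obtain ⟨z, hz⟩ := hne
      have hlow : c < t / (dist x z + dist z y) := by
        rcases ht0.lt_or_eq with ht | ht
        · have hdenom : 0 < dist x z + dist z y :=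
            lt_of_lt_of_le ht (dist_triangle x z y)
          exact lt_of_le_of_lt hc0 (div_pos ht hdenom)
        · have : t / (2 * D + t) = 0 := by rw [← ht, zero_div]
          rw [this] at hc
          calc c < 0 := hc
            _ ≤ t / (dist x z + dist z y) :=
              div_nonneg ht0 (by positivity)
      exact lt_of_lt_of_le hlow (le_ciSup hbdd ⟨z, hz⟩)
  · -- upper bound
    have hrhs : (Real.exp (jMet G x y) - 1) / 2 = t / (2 * D) := by
      rw [hexp]
      field_simp
      ring
    rw [hrhs, sMet]
    exact ciSup_le hub
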